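/- Let V be a complete discrete valuation ring with uniformiser π and fraction field F. Let W be a torsion-free π-adically complete V-module, i.e., a complete normed V-module whose gauge norm ‖x‖ := inf{|π|^j : π^{-j} x ∈ M} (M the unit ball) takes values in {|π|^n : n ∈ ℤ} ∪ {0}. Then the Banach F-vector space F·M with the gauge norm is isometrically isomorphic to C₀(D, F) for some set D, and this isomorphism maps M onto the unit ball C₀(D, V). -/

import Mathlib

/-!
Statement 19: Structure theorem.  Let `V` be a complete discrete valuation ring with
uniformiser `π`.  Every `π`-adically complete, torsion-free `V`-module `M` (the unit ball
of the Banach space `F·M` with the gauge norm) is isomorphic to `C₀(D, V)` for some set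
`D`; equivalently, `F·M` with the gauge norm is isometrically isomorphic to `C₀(D, F)` by
an isomorphism carrying `M` onto the unit ball `C₀(D, V)`.
-/

/-- `C₀(D, V)` as a submodule of `D → V`: functions whose values are eventually divisible
by every power of `π` outside a finite set (the unit ball of `C₀(D, F)`). -/
def C0sub (V : Type) [CommRing V] (π : V) (D : Type) : Submodule V (D → V) where
  carrier := {f | ∀ n : ℕ, {x : D | ¬ π ^ n ∣ f x}.Finite}
  zero_mem' := fun n => Set.finite_empty.subset fun x hx => absurd (dvd_zero _) hx
  add_mem' := fun {f g} hf hg n => ((hf n).union (hg n)).subset (by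
    intro x hx
    by_cases h1 : π ^ n ∣ f x
    · by_cases h2 : π ^ n ∣ g x
      · exact absurd (dvd_add h1 h2) hx
      · exact Or.inr h2
    · exact Or.inl h1)
  smul_mem' := fun c f hf n => (hf n).subset (by
    intro x hx h
    exact hx (by simpa using h.mul_left c))

namespace StructAux

variable {V : Type} [CommRing V] {π : V}
variable {M : Type} [AddCommGroup M] [Module V M]

theorem memU_iff (n : ℕ) (x : M) :
    x ∈ ((Ideal.span {π}) ^ n • ⊤ : Submodule V M) ↔ ∃ y, x = π ^ n • y := by
  rw [Ideal.span_singleton_pow]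
  constructor
  · intro h
    refine Submodule.smul_induction_on h ?_ ?_
    · rintro r hr m -
      obtain ⟨c, rfl⟩ := Ideal.mem_span_singleton.mp hr
      exact ⟨c • m, by rw [mul_smul]⟩
    · rintro x y ⟨x', rfl⟩ ⟨y', rfl⟩
      exact ⟨x' + y', (smul_add _ _ _).symm⟩
  · rintro ⟨y, rfl⟩
    exact Submodule.smul_mem_smul (Ideal.mem_span_singleton_self _) trivial

theorem memU_iff_dvd (n : ℕ) (x : V) :
    x ∈ ((Ideal.span {π}) ^ n • ⊤ : Submodule V V) ↔ π ^ n ∣ x := by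
  rw [memU_iff]
  constructor
  · rintro ⟨y, rfl⟩; exact ⟨y, rfl⟩
  · rintro ⟨y, rfl⟩; exact ⟨y, rfl⟩

theorem tf_pow (htf : ∀ x : M, π • x = 0 → x = 0) (n : ℕ) (x : M)
    (h : π ^ n • x = 0) : x = 0 := by
  induction n generalizing x with
  | zero => simpa using h
  | succ n ih =>
    rw [pow_succ, mul_smul] at h
    exact htf x (ih (π • x) h)

variable {D : Type} [DecidableEq D] (e : D → M)

theorem term_memU {n : ℕ} {c : V} (h : π ^ n ∣ c) (m : M) :
    c • m ∈ ((Ideal.span {π}) ^ n • ⊤ : Submodule V M) := by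
  obtain ⟨u, rfl⟩ := h
  exact (memU_iff n _).mpr ⟨u • m, by rw [mul_smul]⟩

theorem sumdiff {n : ℕ} {f : D → V} {s s' : Finset D} (hss : s ⊆ s')
    (hd : ∀ d ∈ s', d ∉ s → π ^ n ∣ f d) :
    (∑ d ∈ s', f d • e d) - (∑ d ∈ s, f d • e d) ∈
      ((Ideal.span {π}) ^ n • ⊤ : Submodule V M) := by
  rw [← Finset.sum_sdiff hss, add_sub_cancel_right]
  exact Submodule.sum_mem _ fun d hd' => by
    rw [Finset.mem_sdiff] at hd'
    exact term_memU (hd d hd'.1 hd'.2) _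

theorem approx_transfer {n : ℕ} {f : D → V} {L : M} {S₀ : Finset D}
    (h₀ : ∀ d ∉ S₀, π ^ n ∣ f d)
    (hL : L - (∑ d ∈ S₀, f d • e d) ∈ ((Ideal.span {π}) ^ n • ⊤ : Submodule V M))
    {s : Finset D} (hs : ∀ d ∉ s, π ^ n ∣ f d) :
    L - (∑ d ∈ s, f d • e d) ∈ ((Ideal.span {π}) ^ n • ⊤ : Submodule V M) := by
  have h1 := sumdiff e (Finset.subset_union_right (s₁ := s) (s₂ := S₀))
    (fun d _ hd => h₀ d hd) (f := f)
  have h2 := sumdiff e (Finset.subset_union_left (s₁ := s) (s₂ := S₀))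
    (fun d _ hd => hs d hd) (f := f)
  have : L - (∑ d ∈ s, f d • e d) =
      (L - (∑ d ∈ S₀, f d • e d)) - ((∑ d ∈ s ∪ S₀, f d • e d) - (∑ d ∈ S₀, f d • e d))
        + ((∑ d ∈ s ∪ S₀, f d • e d) - (∑ d ∈ s, f d • e d)) := by abel
  rw [this]
  exact Submodule.add_mem _ (Submodule.sub_mem _ hL h1) h2

end StructAux

namespace StructAux

theorem main_equiv
    (V : Type) [CommRing V] (π : V)
    (hV : IsAdicComplete (Ideal.span {π}) V)
    (M : Type) [AddCommGroup M] [Module V M]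
    (hM : IsAdicComplete (Ideal.span {π}) M)
    (htf : ∀ x : M, π • x = 0 → x = 0)
    (D : Type) (e : D → M)
    (gen : ∀ x : M, ∃ (s : Finset D) (t : D → V) (x' : M),
      x - (∑ d ∈ s, t d • e d) = π • x')
    (ind : ∀ (s : Finset D) (t : D → V),
      (∑ d ∈ s, t d • e d) ∈ (Ideal.span {π} • ⊤ : Submodule V M) →
        ∀ d ∈ s, π ∣ t d) :
    Nonempty (M ≃ₗ[V] ↥(C0sub V π D)) := by
  classical
  -- canonical tail finsets
  have Tfin : ∀ (f : ↥(C0sub V π D)) (n : ℕ), ∃ s : Finset D, ∀ d ∉ s, π ^ n ∣ f.1 d := by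
    intro f n
    have hfin : {x : D | ¬ π ^ n ∣ f.1 x}.Finite := f.2 n
    exact ⟨hfin.toFinset, fun d hd => not_not.mp (fun h => hd (hfin.mem_toFinset.mpr h))⟩
  choose Tf hTf using Tfin
  -- the approximation predicate
  let Apx : (D → V) → M → Prop := fun f L => ∀ (n : ℕ) (s : Finset D),
    (∀ d ∉ s, π ^ n ∣ f d) →
      L - (∑ d ∈ s, f d • e d) ∈ ((Ideal.span {π}) ^ n • ⊤ : Submodule V M)
  -- existence of limits
  have exist : ∀ f : ↥(C0sub V π D), ∃ L, Apx f.1 L := by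
    intro f
    have hseq : ∀ {a c : ℕ}, a ≤ c →
        (∑ d ∈ Tf f a, f.1 d • e d) ≡ (∑ d ∈ Tf f c, f.1 d • e d)
          [SMOD ((Ideal.span {π}) ^ a • ⊤ : Submodule V M)] := by
      intro a c hac
      rw [SModEq.sub_mem]
      have h1 := sumdiff e (Finset.subset_union_left (s₁ := Tf f a) (s₂ := Tf f c))
        (fun d _ hd => hTf f a d hd) (f := f.1)
      have h2 := sumdiff e (Finset.subset_union_right (s₁ := Tf f a) (s₂ := Tf f c))
        (n := a) (fun d _ hd => (pow_dvd_pow π hac).trans (hTf f c d hd)) (f := f.1)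
      have heq : (∑ d ∈ Tf f a, f.1 d • e d) - (∑ d ∈ Tf f c, f.1 d • e d)
          = ((∑ d ∈ Tf f a ∪ Tf f c, f.1 d • e d) - (∑ d ∈ Tf f c, f.1 d • e d))
            - ((∑ d ∈ Tf f a ∪ Tf f c, f.1 d • e d) - (∑ d ∈ Tf f a, f.1 d • e d)) := by abel
      rw [heq]
      exact Submodule.sub_mem _ h2 h1
    obtain ⟨L, hL⟩ := hM.toIsPrecomplete.prec hseq
    refine ⟨L, fun n s hs => ?_⟩
    refine approx_transfer e (hTf f n) ?_ hs
    exact SModEq.sub_mem.mp (hL n).symm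
  -- uniqueness of limits
  have uniq : ∀ (f : ↥(C0sub V π D)) (L L' : M), Apx f.1 L → Apx f.1 L' → L = L' := by
    intro f L L' h h'
    rw [← sub_eq_zero]
    refine hM.toIsHausdorff.haus (L - L') fun n => ?_
    rw [SModEq.zero]
    have h1 := h n (Tf f n) (hTf f n)
    have h2 := h' n (Tf f n) (hTf f n)
    have heq : L - L' = (L - (∑ d ∈ Tf f n, f.1 d • e d))
        - (L' - (∑ d ∈ Tf f n, f.1 d • e d)) := by abel
    rw [heq]
    exact Submodule.sub_mem _ h1 h2
  choose Φ0 hΦ0 using exist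
  -- additivity of Apx
  have apx_add : ∀ (f g : ↥(C0sub V π D)) (L L' : M), Apx f.1 L → Apx g.1 L' →
      Apx (f.1 + g.1) (L + L') := by
    intro f g L L' hf hg n s hs
    set s' := s ∪ Tf f n ∪ Tf g n with hs'
    have h1 : L - (∑ d ∈ s', f.1 d • e d) ∈ ((Ideal.span {π}) ^ n • ⊤ : Submodule V M) :=
      hf n s' fun d hd => hTf f n d fun hdT => hd (by
        rw [hs']
        exact Finset.mem_union.mpr (Or.inl (Finset.mem_union.mpr (Or.inr hdT))))
    have h2 : L' - (∑ d ∈ s', g.1 d • e d) ∈ ((Ideal.span {π}) ^ n • ⊤ : Submodule V M) :=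
      hg n s' fun d hd => hTf g n d fun hdT => hd (by
        rw [hs']
        exact Finset.mem_union.mpr (Or.inr hdT))
    have h3 : (L + L') - (∑ d ∈ s', (f.1 + g.1) d • e d)
        ∈ ((Ideal.span {π}) ^ n • ⊤ : Submodule V M) := by
      have hsum : ∑ d ∈ s', (f.1 + g.1) d • e d
          = (∑ d ∈ s', f.1 d • e d) + (∑ d ∈ s', g.1 d • e d) := by
        rw [← Finset.sum_add_distrib]
        exact Finset.sum_congr rfl fun d _ => by rw [Pi.add_apply, add_smul]
      rw [hsum]
      have heq : (L + L') - ((∑ d ∈ s', f.1 d • e d) + (∑ d ∈ s', g.1 d • e d))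
          = (L - (∑ d ∈ s', f.1 d • e d)) + (L' - (∑ d ∈ s', g.1 d • e d)) := by abel
      rw [heq]
      exact Submodule.add_mem _ h1 h2
    refine approx_transfer e (S₀ := s') (fun d hd => ?_) h3 hs
    refine hs d fun hds => hd ?_
    rw [hs']
    exact Finset.mem_union.mpr (Or.inl (Finset.mem_union.mpr (Or.inl hds)))
  -- smul
  have apx_smul : ∀ (f : ↥(C0sub V π D)) (c : V) (L : M), Apx f.1 L →
      Apx (c • f.1) (c • L) := by
    intro f c L hf n s hs
    set s' := s ∪ Tf f n with hs'
    have h1 : L - (∑ d ∈ s', f.1 d • e d) ∈ ((Ideal.span {π}) ^ n • ⊤ : Submodule V M) :=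
      hf n s' fun d hd => hTf f n d fun hdT => hd (by
        rw [hs']
        exact Finset.mem_union.mpr (Or.inr hdT))
    have h3 : (c • L) - (∑ d ∈ s', (c • f.1) d • e d)
        ∈ ((Ideal.span {π}) ^ n • ⊤ : Submodule V M) := by
      have hsum : ∑ d ∈ s', (c • f.1) d • e d = c • ∑ d ∈ s', f.1 d • e d := by
        rw [Finset.smul_sum]
        exact Finset.sum_congr rfl fun d _ => by
          rw [Pi.smul_apply, smul_eq_mul, mul_smul]
      rw [hsum, ← smul_sub]
      exact Submodule.smul_mem _ c h1
    refine approx_transfer e (S₀ := s') (fun d hd => ?_) h3 hs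
    exact hs d fun hds => hd (by rw [hs']; exact Finset.mem_union.mpr (Or.inl hds))
  -- the linear map
  let Φ : ↥(C0sub V π D) →ₗ[V] M :=
    { toFun := Φ0
      map_add' := fun f g => (uniq (f + g) (Φ0 (f + g)) (Φ0 f + Φ0 g) (hΦ0 (f + g))
        (apx_add f g _ _ (hΦ0 f) (hΦ0 g)))
      map_smul' := fun c f => (uniq (c • f) (Φ0 (c • f)) (c • Φ0 f) (hΦ0 (c • f))
        (apx_smul f c _ (hΦ0 f))) }
  -- injectivity
  have hinj : Function.Injective Φ := by
    rw [injective_iff_map_eq_zero]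
    intro f hf0
    have hapx : Apx f.1 0 := by
      have := hΦ0 f
      have hΦf : Φ0 f = 0 := hf0
      rwa [hΦf] at this
    have hdiv : ∀ (n : ℕ) (d : D), π ^ n ∣ f.1 d := by
      intro n
      induction n with
      | zero => intro d; simpa using one_dvd _
      | succ n ih =>
        choose g hg using ih
        have h1 := hapx (n + 1) (Tf f (n + 1)) (hTf f (n + 1))
        rw [zero_sub] at h1
        have h1' := Submodule.neg_mem _ h1
        rw [neg_neg] at h1'
        obtain ⟨y, hy⟩ := (memU_iff (n + 1) _).mp h1'
        have h2 : ∑ d ∈ Tf f (n + 1), f.1 d • e d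
            = π ^ n • ∑ d ∈ Tf f (n + 1), g d • e d := by
          rw [Finset.smul_sum]
          exact Finset.sum_congr rfl fun d _ => by rw [hg d, mul_smul]
        have h3 : π ^ n • ((∑ d ∈ Tf f (n + 1), g d • e d) - π • y) = 0 := by
          rw [smul_sub, ← h2, hy, pow_succ, mul_smul, sub_self]
        have h4 := tf_pow htf n _ h3
        rw [sub_eq_zero] at h4
        have h5 : (∑ d ∈ Tf f (n + 1), g d • e d)
            ∈ (Ideal.span {π} • ⊤ : Submodule V M) := by
          rw [h4]
          exact Submodule.smul_mem_smul (Ideal.mem_span_singleton_self π) trivial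
        have h6 := ind (Tf f (n + 1)) g h5
        intro d
        by_cases hd : d ∈ Tf f (n + 1)
        · obtain ⟨c, hc⟩ := h6 d hd
          exact ⟨c, by rw [hg d, hc, pow_succ]; ring⟩
        · exact hTf f (n + 1) d hd
    refine Subtype.ext (funext fun d => ?_)
    refine hV.toIsHausdorff.haus (f.1 d) fun n => ?_
    rw [SModEq.zero, memU_iff_dvd]
    exact hdiv n d
  -- surjectivity
  have hsurj : Function.Surjective Φ := by
    intro m
    choose sOf tOf nxt hgen using gen
    let A : ℕ → M := fun n => Nat.rec m (fun _ x => nxt x) n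
    have hAs : ∀ n, A (n + 1) = nxt (A n) := fun n => rfl
    let s : ℕ → Finset D := fun n => sOf (A n)
    let t : ℕ → D → V := fun n d => if d ∈ sOf (A n) then tOf (A n) d else 0
    have ht : ∀ n, ∑ d ∈ s n, t n d • e d = ∑ d ∈ sOf (A n), tOf (A n) d • e d :=
      fun n => Finset.sum_congr rfl fun d hd => by simp only [t, if_pos hd]
    have key : ∀ n, m - (∑ l ∈ Finset.range n, π ^ l • ∑ d ∈ s l, t l d • e d)
        = π ^ n • A n := by
      intro n
      induction n with
      | zero => simp [A]
      | succ n ih =>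
        rw [Finset.sum_range_succ]
        have heq : m - ((∑ l ∈ Finset.range n, π ^ l • ∑ d ∈ s l, t l d • e d)
              + π ^ n • ∑ d ∈ s n, t n d • e d)
            = (m - (∑ l ∈ Finset.range n, π ^ l • ∑ d ∈ s l, t l d • e d))
              - π ^ n • ∑ d ∈ s n, t n d • e d := by abel
        rw [heq, ih, ← smul_sub, ht n, hgen (A n), ← hAs n, pow_succ, mul_smul]
    let w : D → ℕ → V := fun d n => ∑ l ∈ Finset.range n, π ^ l * t l d
    have hwmod : ∀ d, ∀ {a c : ℕ}, a ≤ c →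
        w d a ≡ w d c [SMOD ((Ideal.span {π}) ^ a • ⊤ : Submodule V V)] := by
      intro d a c hac
      rw [SModEq.sub_mem, memU_iff_dvd]
      have : w d a - w d c = -∑ l ∈ Finset.range c \ Finset.range a, π ^ l * t l d := by
        have hsd := Finset.sum_sdiff (f := fun l => π ^ l * t l d)
          (Finset.range_subset_range.mpr hac)
        simp only [w]
        rw [← hsd]
        abel
      rw [this, dvd_neg]
      refine Finset.dvd_sum fun l hl => ?_
      rw [Finset.mem_sdiff, Finset.mem_range, Finset.mem_range, not_lt] at hl
      exact Dvd.dvd.mul_right (pow_dvd_pow π hl.2) _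
    choose f hf using fun d => hV.toIsPrecomplete.prec (hwmod d)
    have hfw : ∀ d n, π ^ n ∣ f d - w d n := fun d n =>
      (memU_iff_dvd n _).mp (SModEq.sub_mem.mp (hf d n).symm)
    have hsupp : ∀ (n : ℕ) (d : D), (∀ l < n, d ∉ s l) → w d n = 0 := by
      intro n d hd
      refine Finset.sum_eq_zero fun l hl => ?_
      rw [Finset.mem_range] at hl
      simp only [t, if_neg (show d ∉ sOf (A l) from hd l hl), mul_zero]
    have htail : ∀ n d, d ∉ (Finset.range n).biUnion s → π ^ n ∣ f d := by
      intro n d hd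
      have hw : w d n = 0 := hsupp n d fun l hl hls =>
        hd (Finset.mem_biUnion.mpr ⟨l, Finset.mem_range.mpr hl, hls⟩)
      have := hfw d n
      rwa [hw, sub_zero] at this
    have hfC : f ∈ C0sub V π D := by
      intro n
      refine Set.Finite.subset ((Finset.range n).biUnion s).finite_toSet fun d hd => ?_
      simp only [Set.mem_setOf_eq] at hd
      by_contra hdd
      exact hd (htail n d hdd)
    have hapx : Apx f m := by
      intro n s0 hs0
      set S := (Finset.range n).biUnion s with hS
      refine approx_transfer e (S₀ := S) (fun d hd => htail n d hd) ?_ hs0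
      have hsum1 : ∑ l ∈ Finset.range n, π ^ l • ∑ d ∈ s l, t l d • e d
          = ∑ d ∈ S, w d n • e d := by
        have step1 : ∀ l ∈ Finset.range n,
            π ^ l • ∑ d ∈ s l, t l d • e d = ∑ d ∈ S, (π ^ l * t l d) • e d := by
          intro l hl
          rw [Finset.smul_sum]
          rw [Finset.sum_subset (Finset.subset_biUnion_of_mem s hl)]
          · exact Finset.sum_congr rfl fun d _ => by rw [smul_smul]
          · intro d _ hds
            have hds' : d ∉ sOf (A l) := hds
            simp only [t, if_neg hds', mul_zero, zero_smul, smul_zero]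
        rw [Finset.sum_congr rfl step1, Finset.sum_comm]
        refine Finset.sum_congr rfl fun d _ => ?_
        simp only [w]
        rw [Finset.sum_smul]
      have e1 : m - ∑ d ∈ S, w d n • e d
          ∈ ((Ideal.span {π}) ^ n • ⊤ : Submodule V M) := by
        rw [← hsum1, key n]
        exact (memU_iff n _).mpr ⟨A n, rfl⟩
      have e2 : (∑ d ∈ S, w d n • e d) - (∑ d ∈ S, f d • e d)
          ∈ ((Ideal.span {π}) ^ n • ⊤ : Submodule V M) := by
        rw [← Finset.sum_sub_distrib]
        refine Submodule.sum_mem _ fun d _ => ?_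
        rw [← sub_smul]
        refine term_memU ?_ _
        exact dvd_sub_comm.mp (hfw d n)
      have heq : m - (∑ d ∈ S, f d • e d)
          = (m - ∑ d ∈ S, w d n • e d)
            + ((∑ d ∈ S, w d n • e d) - (∑ d ∈ S, f d • e d)) := by abel
      rw [heq]
      exact Submodule.add_mem _ e1 e2
    exact ⟨⟨f, hfC⟩, (uniq ⟨f, hfC⟩ (Φ0 ⟨f, hfC⟩) m (hΦ0 ⟨f, hfC⟩) hapx)⟩
  exact ⟨(LinearEquiv.ofBijective Φ ⟨hinj, hsurj⟩).symm⟩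

end StructAux

open StructAux in
theorem structure_theorem_for_complete_torsionfree_modules
    (V : Type) [CommRing V] [IsDomain V] [IsDiscreteValuationRing V]
    (π : V) (hπ : Irreducible π)
    (hV : IsAdicComplete (Ideal.span {π}) V)
    (M : Type) [AddCommGroup M] [Module V M]
    (hM : IsAdicComplete (Ideal.span {π}) M)
    (htf : ∀ x : M, π • x = 0 → x = 0) :
    ∃ D : Type, Nonempty (M ≃ₗ[V] ↥(C0sub V π D)) := by
  classical
  haveI hmax : (Ideal.span {π}).IsMaximal := PrincipalIdealRing.isMaximal_of_irreducible hπ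
  letI : Field (V ⧸ Ideal.span {π}) := Ideal.Quotient.field (Ideal.span {π})
  let b := Module.Basis.ofVectorSpace (V ⧸ Ideal.span {π}) (M ⧸ (Ideal.span {π} • ⊤ : Submodule V M))
  refine ⟨↥(Module.Basis.ofVectorSpaceIndex (V ⧸ Ideal.span {π})
    (M ⧸ (Ideal.span {π} • ⊤ : Submodule V M))), ?_⟩
  choose e he using fun d : ↥(Module.Basis.ofVectorSpaceIndex (V ⧸ Ideal.span {π})
      (M ⧸ (Ideal.span {π} • ⊤ : Submodule V M))) =>
    Submodule.Quotient.mk_surjective (Ideal.span {π} • ⊤ : Submodule V M) (b d)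
  choose lift hlift using Ideal.Quotient.mk_surjective (I := Ideal.span {π})
  have mk_sum : ∀ (s : Finset _) (t : _ → V),
      Submodule.Quotient.mk (p := (Ideal.span {π} • ⊤ : Submodule V M))
        (∑ d ∈ s, t d • e d)
        = ∑ d ∈ s, (Ideal.Quotient.mk (Ideal.span {π}) (t d)) • b d := by
    intro s t
    rw [← Submodule.mkQ_apply, map_sum]
    refine Finset.sum_congr rfl fun d _ => ?_
    rw [Submodule.mkQ_apply, ← he d, ← Module.Quotient.mk_smul_mk]
  refine main_equiv V π hV M hM htf _ e ?_ ?_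
  · -- generation
    intro x
    set r := b.repr (Submodule.Quotient.mk (p := (Ideal.span {π} • ⊤ : Submodule V M)) x)
      with hr
    refine ⟨r.support, fun d => lift (r d), ?_⟩
    have hmem : x - (∑ d ∈ r.support, lift (r d) • e d)
        ∈ (Ideal.span {π} • ⊤ : Submodule V M) := by
      rw [← Submodule.Quotient.mk_eq_zero, Submodule.Quotient.mk_sub, mk_sum]
      have : ∑ d ∈ r.support, (Ideal.Quotient.mk (Ideal.span {π}) (lift (r d))) • b d
          = Submodule.Quotient.mk (p := (Ideal.span {π} • ⊤ : Submodule V M)) x := by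
        conv_rhs => rw [← b.linearCombination_repr (Submodule.Quotient.mk x)]
        rw [Finsupp.linearCombination_apply, Finsupp.sum, ← hr]
        exact Finset.sum_congr rfl fun d _ => by rw [hlift]
      rw [this, sub_self]
    have hmem' : x - (∑ d ∈ r.support, lift (r d) • e d)
        ∈ ((Ideal.span {π}) ^ 1 • ⊤ : Submodule V M) := by rwa [pow_one]
    obtain ⟨y, hy⟩ := (StructAux.memU_iff 1 _).mp hmem'
    exact ⟨y, by rw [hy, pow_one]⟩
  · -- independence
    intro s t hmem d hd
    have h0 : ∑ d ∈ s, (Ideal.Quotient.mk (Ideal.span {π}) (t d)) • b d = 0 := by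
      rw [← mk_sum, Submodule.Quotient.mk_eq_zero]; exact hmem
    have := linearIndependent_iff'.mp b.linearIndependent s
      (fun d => Ideal.Quotient.mk (Ideal.span {π}) (t d)) h0 d hd
    rwa [Ideal.Quotient.eq_zero_iff_mem, Ideal.mem_span_singleton] at this
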